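/- Let M be a module over a ring R such that every submodule N of M can be written as N = X + A for some cyclic submodule X of M and some submodule A small in M. Then M is principally Goldie*-lifting if and only if M is Goldie*-lifting. -/
import Mathlib


/-- A submodule `K` is small (superfluous) in `M`:
`K + N = M` implies `N = M` for all submodules `N`. -/
def IsSmallSub {R M : Type*} [Ring R] [AddCommGroup M] [Module R M]
    (K : Submodule R M) : Prop :=
  ∀ N : Submodule R M, K ⊔ N = ⊤ → N = ⊤

/-- `K` is small in the submodule `N` (where `K ≤ N`):
for every submodule `L ≤ N`, `K + L = N` implies `L = N`. -/
def IsSmallIn {R M : Type*} [Ring R] [AddCommGroup M] [Module R M]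
    (K N : Submodule R M) : Prop :=
  ∀ L : Submodule R M, L ≤ N → K ⊔ L = N → L = N

/-- The β* relation: `X β* Y` iff `(X+Y)/X ≪ M/X` and `(X+Y)/Y ≪ M/Y`. -/
def BetaStar {R M : Type*} [Ring R] [AddCommGroup M] [Module R M]
    (X Y : Submodule R M) : Prop :=
  IsSmallSub ((X ⊔ Y).map X.mkQ) ∧ IsSmallSub ((X ⊔ Y).map Y.mkQ)

/-- A submodule is cyclic if it is generated by a single element. -/
def IsCyclicSub {R M : Type*} [Ring R] [AddCommGroup M] [Module R M]
    (X : Submodule R M) : Prop :=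
  ∃ m : M, X = Submodule.span R {m}

/-- A submodule is a direct summand if it has a complement. -/
def IsDirectSummand {R M : Type*} [Ring R] [AddCommGroup M] [Module R M]
    (D : Submodule R M) : Prop :=
  ∃ D' : Submodule R M, IsCompl D D'

/-- `M` is principally Goldie*-lifting: every cyclic submodule is β* equivalent
to a direct summand. -/
def PrinGStarLifting (R M : Type*) [Ring R] [AddCommGroup M] [Module R M] : Prop :=
  ∀ X : Submodule R M, IsCyclicSub X → ∃ D : Submodule R M, IsDirectSummand D ∧ BetaStar X D

/-- The radical of `M`: the intersection of all maximal proper submodules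
(equal to `M` if there are none). -/
def RadSub (R M : Type*) [Ring R] [AddCommGroup M] [Module R M] : Submodule R M :=
  sInf {N : Submodule R M | IsCoatom N}

lemma small_map_iff {R M : Type*} [Ring R] [AddCommGroup M] [Module R M]
    (X Y : Submodule R M) :
    IsSmallSub ((X ⊔ Y).map X.mkQ) ↔
      ∀ L : Submodule R M, X ≤ L → Y ⊔ L = ⊤ → L = ⊤ := by
  have hker : LinearMap.ker X.mkQ = X := Submodule.ker_mkQ X
  have hmapX : X.map X.mkQ = ⊥ := Submodule.mkQ_map_self X
  have hmap : (X ⊔ Y).map X.mkQ = Y.map X.mkQ := by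
    rw [Submodule.map_sup, hmapX, bot_sup_eq]
  constructor
  · intro hs L hXL hYL
    have h1 : (X ⊔ Y).map X.mkQ ⊔ L.map X.mkQ = ⊤ := by
      rw [← Submodule.map_sup]
      have hT : X ⊔ Y ⊔ L = ⊤ := by
        rw [sup_assoc, hYL, sup_top_eq]
      rw [hT, Submodule.map_top, Submodule.range_mkQ]
    have h2 := hs _ h1
    have h3 : (L.map X.mkQ).comap X.mkQ = L := by
      rw [Submodule.comap_map_eq, hker, sup_eq_left.mpr hXL]
    rw [h2, Submodule.comap_top] at h3
    exact h3.symm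
  · intro hs N' hN'
    set L := N'.comap X.mkQ with hL
    have hXL : X ≤ L := by
      intro x hx
      simp only [hL, Submodule.mem_comap, Submodule.mkQ_apply,
        (Submodule.Quotient.mk_eq_zero X).mpr hx]
      exact N'.zero_mem
    have hmapL : L.map X.mkQ = N' :=
      Submodule.map_comap_eq_of_surjective (Submodule.mkQ_surjective X) N'
    have hYL : Y ⊔ L = ⊤ := by
      have hm : (Y ⊔ L).map X.mkQ = ⊤ := by
        rw [Submodule.map_sup, hmapL, ← hmap, hN']
      have : ((Y ⊔ L).map X.mkQ).comap X.mkQ = Y ⊔ L := by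
        rw [Submodule.comap_map_eq, hker, sup_eq_left.mpr (le_trans hXL le_sup_right)]
      rw [hm, Submodule.comap_top] at this
      exact this.symm
    have := hs L hXL hYL
    rw [← hmapL, this, Submodule.map_top, Submodule.range_mkQ]

lemma betaStar_iff {R M : Type*} [Ring R] [AddCommGroup M] [Module R M]
    (X Y : Submodule R M) :
    BetaStar X Y ↔
      (∀ L : Submodule R M, X ≤ L → Y ⊔ L = ⊤ → L = ⊤) ∧
      (∀ L : Submodule R M, Y ≤ L → X ⊔ L = ⊤ → L = ⊤) := by
  unfold BetaStar
  rw [small_map_iff]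
  have : (X ⊔ Y).map Y.mkQ = (Y ⊔ X).map Y.mkQ := by rw [sup_comm]
  rw [this, small_map_iff]

/-- If every submodule of `M` is the sum of a cyclic submodule
and a small submodule, then `M` is principally Goldie*-lifting iff it is
Goldie*-lifting. -/
theorem stmt_19 {R M : Type*} [Ring R] [AddCommGroup M] [Module R M]
    (h : ∀ N : Submodule R M, ∃ X A : Submodule R M,
      IsCyclicSub X ∧ IsSmallSub A ∧ N = X ⊔ A) :
    PrinGStarLifting R M ↔
      ∀ N : Submodule R M, ∃ D : Submodule R M, IsDirectSummand D ∧ BetaStar N D := by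
  constructor
  · intro hp N
    obtain ⟨X, A, hX, hA, hN⟩ := h N
    obtain ⟨D, hD, hb⟩ := hp X hX
    obtain ⟨hb1, hb2⟩ := (betaStar_iff X D).mp hb
    refine ⟨D, hD, (betaStar_iff N D).mpr ⟨?_, ?_⟩⟩
    · intro L hNL hDL
      exact hb1 L (le_trans (hN ▸ le_sup_left) hNL) hDL
    · intro L hDL hNL
      have hXL : X ⊔ L = ⊤ := by
        apply hA
        rw [← sup_assoc, sup_comm A X, ← hN, hNL]
      exact hb2 L hDL hXL
  · intro hg X _
    exact hg X
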